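/- arXiv:2201.01593 — 3 statements merged into one kernel-verified Lean document; each statement's English description precedes it below -/
import Mathlib

section
/- The Jacobian determinant of the Cayley-type map B(x,y) = (2x, 1 − |x|² − y²)/(|x|² + (1+y)²) at z = (x,y) equals −(2/((1+y)² + |x|²))^N. -/
lemma det_id_add_smulRight' {E : Type*} [AddCommGroup E] [Module ℝ E] [FiniteDimensional ℝ E]
    (φ : E →ₗ[ℝ] ℝ) (u : E) :
    LinearMap.det (LinearMap.id + φ.smulRight u) = 1 + φ u := by
  classical
  set b := Module.finBasis ℝ E
  rw [← LinearMap.det_toMatrix b]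
  have hM : LinearMap.toMatrix b b (LinearMap.id + φ.smulRight u)
      = 1 + Matrix.replicateCol Unit (fun i => b.repr u i) * Matrix.replicateRow Unit (fun j => φ (b j)) := by
    ext i j
    simp [LinearMap.toMatrix_apply, Matrix.one_apply, Matrix.mul_apply,
      Finsupp.single_apply, eq_comm, mul_comm]
  rw [hM, Matrix.det_one_add_replicateCol_mul_replicateRow]
  congr 1
  conv_rhs => rw [← b.sum_repr u]
  simp [dotProduct, map_sum, mul_comm]
  conv_rhs => rw [← b.sum_repr u]
  rw [map_sum]
  exact Finset.sum_congr rfl fun i _ => by rw [map_smul, smul_eq_mul, mul_comm]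

/-- The Cayley type transformation `B(x,y) = (2x, 1 − |x|² − y²)/(|x|² + (1+y)²)`. -/
noncomputable def cayleyB {m : ℕ} (z : (Fin m → ℝ) × ℝ) : (Fin m → ℝ) × ℝ :=
  (fun i => 2 * z.1 i / ((∑ j, z.1 j ^ 2) + (1 + z.2) ^ 2),
    (1 - (∑ j, z.1 j ^ 2) - z.2 ^ 2) / ((∑ j, z.1 j ^ 2) + (1 + z.2) ^ 2))

set_option maxHeartbeats 1000000 in
/-- The Jacobian determinant of the Cayley type map at `z = (x, y)` (with
`|x|² + (1+y)² ≠ 0`) equals `−(2/((1+y)² + |x|²))^N`, where `N = m + 1`. -/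
theorem stmt7 {m : ℕ} (hm : 1 ≤ m) (z : (Fin m → ℝ) × ℝ)
    (hq : (∑ j, z.1 j ^ 2) + (1 + z.2) ^ 2 ≠ 0) :
    DifferentiableAt ℝ cayleyB z ∧
    LinearMap.det ((fderiv ℝ cayleyB z) : ((Fin m → ℝ) × ℝ) →ₗ[ℝ] ((Fin m → ℝ) × ℝ))
      = -(2 / ((1 + z.2) ^ 2 + ∑ j, z.1 j ^ 2)) ^ (m + 1) := by
  classical
  set Q : ℝ := (∑ j, z.1 j ^ 2) + (1 + z.2) ^ 2 with hQdef
  set q : (Fin m → ℝ) × ℝ → ℝ :=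
    fun w => (∑ j, w.1 j * w.1 j) + (1 + w.2) * (1 + w.2) with hqdef
  have hqQ : q z = Q := by simp [hqdef, hQdef, pow_two]
  have hq0 : q z ≠ 0 := by rw [hqQ]; exact hq
  set π : Fin m → ((Fin m → ℝ) × ℝ →L[ℝ] ℝ) := fun j =>
    (ContinuousLinearMap.proj j).comp (ContinuousLinearMap.fst ℝ (Fin m → ℝ) ℝ) with hπ
  set σ : (Fin m → ℝ) × ℝ →L[ℝ] ℝ := ContinuousLinearMap.snd ℝ (Fin m → ℝ) ℝ with hσ
  have hπd : ∀ j, HasFDerivAt (fun w : (Fin m → ℝ) × ℝ => w.1 j) (π j) z :=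
    fun j => (π j).hasFDerivAt
  have h1 : HasFDerivAt (fun w : (Fin m → ℝ) × ℝ => ∑ j, w.1 j * w.1 j)
      (∑ j, (z.1 j • π j + z.1 j • π j)) z :=
    HasFDerivAt.fun_sum fun j _ => (hπd j).mul (hπd j)
  have hσd : HasFDerivAt (fun w : (Fin m → ℝ) × ℝ => 1 + w.2) σ z := σ.hasFDerivAt.const_add 1
  have h2 : HasFDerivAt (fun w : (Fin m → ℝ) × ℝ => (1 + w.2) * (1 + w.2))
      ((1 + z.2) • σ + (1 + z.2) • σ) z := hσd.mul hσd
  have hqd : HasFDerivAt q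
      ((∑ j, (z.1 j • π j + z.1 j • π j)) + ((1 + z.2) • σ + (1 + z.2) • σ)) z := h1.add h2
  have hinv : HasFDerivAt (fun w : (Fin m → ℝ) × ℝ => (q w)⁻¹)
      ((-ContinuousLinearMap.mulLeftRight ℝ ℝ (q z)⁻¹ (q z)⁻¹).comp
        ((∑ j, (z.1 j • π j + z.1 j • π j)) + ((1 + z.2) • σ + (1 + z.2) • σ))) z :=
    (hasFDerivAt_inv' hq0).comp z hqd
  have hp : HasFDerivAt
      (fun w : (Fin m → ℝ) × ℝ => (2 : ℝ) • w + ((0 : Fin m → ℝ), (2 : ℝ)))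
      ((2 : ℝ) • ContinuousLinearMap.id ℝ ((Fin m → ℝ) × ℝ)) z :=
    ((hasFDerivAt_id z).const_smul (2 : ℝ)).add_const _
  have hF : HasFDerivAt
      (fun w : (Fin m → ℝ) × ℝ =>
        (q w)⁻¹ • ((2 : ℝ) • w + ((0 : Fin m → ℝ), (2 : ℝ))) - ((0 : Fin m → ℝ), (1 : ℝ)))
      ((q z)⁻¹ • ((2 : ℝ) • ContinuousLinearMap.id ℝ ((Fin m → ℝ) × ℝ))
        + ((-ContinuousLinearMap.mulLeftRight ℝ ℝ (q z)⁻¹ (q z)⁻¹).comp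
            ((∑ j, (z.1 j • π j + z.1 j • π j)) + ((1 + z.2) • σ + (1 + z.2) • σ))).smulRight
          ((2 : ℝ) • z + ((0 : Fin m → ℝ), (2 : ℝ)))) z :=
    (hinv.smul hp).sub_const _
  have hqc : Continuous q := by fun_prop
  have hev : cayleyB =ᶠ[nhds z] fun w : (Fin m → ℝ) × ℝ =>
      (q w)⁻¹ • ((2 : ℝ) • w + ((0 : Fin m → ℝ), (2 : ℝ))) - ((0 : Fin m → ℝ), (1 : ℝ)) := by
    filter_upwards [hqc.continuousAt.eventually_ne hq0] with w hw
    have hqw : q w = (∑ j, w.1 j ^ 2) + (1 + w.2) ^ 2 := by simp [hqdef, pow_two]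
    have hw2 : (∑ j, w.1 j ^ 2) + (1 + w.2) ^ 2 ≠ 0 := by rwa [hqw] at hw
    refine Prod.ext ?_ ?_
    · funext i
      have h1' : ((q w)⁻¹ • ((2 : ℝ) • w + ((0 : Fin m → ℝ), (2 : ℝ)))
          - ((0 : Fin m → ℝ), (1 : ℝ))).1 i = (q w)⁻¹ * (2 * w.1 i) := by simp
      rw [h1', hqw]
      show 2 * w.1 i / ((∑ j, w.1 j ^ 2) + (1 + w.2) ^ 2) = _
      field_simp
    · have h2' : ((q w)⁻¹ • ((2 : ℝ) • w + ((0 : Fin m → ℝ), (2 : ℝ)))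
          - ((0 : Fin m → ℝ), (1 : ℝ))).2 = (q w)⁻¹ * (2 * w.2 + 2) - 1 := by simp; ring
      rw [h2', hqw]
      show (1 - (∑ j, w.1 j ^ 2) - w.2 ^ 2) / ((∑ j, w.1 j ^ 2) + (1 + w.2) ^ 2) = _
      field_simp
      ring
  have hB := hF.congr_of_eventuallyEq hev
  set T : (Fin m → ℝ) × ℝ →L[ℝ] ℝ :=
    (∑ j, (z.1 j • π j + z.1 j • π j)) + ((1 + z.2) • σ + (1 + z.2) • σ) with hT
  set Dc : (Fin m → ℝ) × ℝ →L[ℝ] (Fin m → ℝ) × ℝ :=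
    (q z)⁻¹ • ((2 : ℝ) • ContinuousLinearMap.id ℝ ((Fin m → ℝ) × ℝ))
      + ((-ContinuousLinearMap.mulLeftRight ℝ ℝ (q z)⁻¹ (q z)⁻¹).comp T).smulRight
          ((2 : ℝ) • z + ((0 : Fin m → ℝ), (2 : ℝ))) with hDc
  refine ⟨hB.differentiableAt, ?_⟩
  rw [hB.fderiv]
  set ψ : (Fin m → ℝ) × ℝ →ₗ[ℝ] ℝ :=
    { toFun := fun v => (∑ j, z.1 j * v.1 j) + (1 + z.2) * v.2
      map_add' := fun a b => by
        simp only [Prod.fst_add, Pi.add_apply, Prod.snd_add, mul_add, Finset.sum_add_distrib]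
        ring
      map_smul' := fun c a => by
        simp only [Prod.smul_fst, Pi.smul_apply, Prod.smul_snd, smul_eq_mul,
          RingHom.id_apply, mul_add, Finset.mul_sum, mul_comm, mul_left_comm]
        ring } with hψ
  set φ : (Fin m → ℝ) × ℝ →ₗ[ℝ] ℝ := (-2 / Q) • ψ with hφ
  set w : (Fin m → ℝ) × ℝ := (z.1, 1 + z.2) with hw
  have hQne : Q ≠ 0 := hq
  have key : ((Dc : (Fin m → ℝ) × ℝ →L[ℝ] (Fin m → ℝ) × ℝ) :
      (Fin m → ℝ) × ℝ →ₗ[ℝ] (Fin m → ℝ) × ℝ) = (2 / Q) • (LinearMap.id + φ.smulRight w) := by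
    apply LinearMap.ext
    intro v
    set s : ℝ := ∑ j, z.1 j * v.1 j with hs
    have hTv : T v = 2 * s + 2 * ((1 + z.2) * v.2) := by
      rw [hT]
      simp only [ContinuousLinearMap.add_apply, ContinuousLinearMap.sum_apply,
        ContinuousLinearMap.smul_apply, smul_eq_mul, hσ, ContinuousLinearMap.coe_snd']
      rw [hs, Finset.mul_sum]
      have : ∀ j, z.1 j * (π j) v + z.1 j * (π j) v = 2 * (z.1 j * v.1 j) := by
        intro j; simp [hπ]; ring
      rw [Finset.sum_congr rfl fun j _ => this j]
      ring
    have hφv : φ v = -2 / Q * (s + (1 + z.2) * v.2) := by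
      rw [hφ, LinearMap.smul_apply, smul_eq_mul, hψ]
      rfl
    have hLv : (Dc : (Fin m → ℝ) × ℝ →ₗ[ℝ] (Fin m → ℝ) × ℝ) v
        = Q⁻¹ • ((2 : ℝ) • v)
          + (-(Q⁻¹ * (2 * s + 2 * ((1 + z.2) * v.2)) * Q⁻¹))
            • ((2 : ℝ) • z + ((0 : Fin m → ℝ), (2 : ℝ))) := by
      rw [ContinuousLinearMap.coe_coe, hDc]
      rw [ContinuousLinearMap.add_apply, ContinuousLinearMap.smul_apply,
        ContinuousLinearMap.smulRight_apply, ContinuousLinearMap.comp_apply,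
        ContinuousLinearMap.neg_apply, ContinuousLinearMap.mulLeftRight_apply,
        ContinuousLinearMap.smul_apply, ContinuousLinearMap.id_apply, hTv, hqQ]
    have hRv : ((2 / Q) • (LinearMap.id + φ.smulRight w) :
        (Fin m → ℝ) × ℝ →ₗ[ℝ] (Fin m → ℝ) × ℝ) v
        = (2 / Q) • (v + (-2 / Q * (s + (1 + z.2) * v.2)) • w) := by
      rw [LinearMap.smul_apply, LinearMap.add_apply, LinearMap.id_apply,
        LinearMap.smulRight_apply, hφv]
    rw [hLv, hRv]
    refine Prod.ext ?_ ?_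
    · funext i
      simp only [Prod.fst_add, Prod.smul_fst, Pi.add_apply, Pi.smul_apply, Pi.zero_apply,
        smul_eq_mul, hw]
      field_simp
      ring
    · simp only [Prod.snd_add, Prod.smul_snd, smul_eq_mul, hw]
      field_simp
      ring
  rw [key, LinearMap.det_smul, det_id_add_smulRight']
  have hφw : φ w = -2 := by
    have hψw : ψ w = Q := by
      simp only [hψ, LinearMap.coe_mk, AddHom.coe_mk, hw, hQdef, pow_two]
    rw [hφ, LinearMap.smul_apply, hψw, smul_eq_mul]
    field_simp
  have hrank : Module.finrank ℝ ((Fin m → ℝ) × ℝ) = m + 1 := by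
    simp [Module.finrank_prod]
  rw [hφw, hrank]
  have h12 : (1 : ℝ) + (-2) = -1 := by norm_num
  rw [h12]
  have hQcomm : Q = (1 + z.2) ^ 2 + ∑ j, z.1 j ^ 2 := by rw [hQdef]; ring
  rw [hQcomm]
  ring
end

section
/- Let 2 ≤ p < N and let X(x,y) = (|x|² + (1−y)²)/(|x|² + (1+y)²) ∈ [0,1) for (x,y) in the half-space ℝ^N_+ with (x,y) ≠ (0,1). Define V_p(x,y) = [1 + X^{(N−1)/(p−1)} − 2 X^{(N−p)/(2(p−1))} (|x|² + (1+y)²)^{−1}(|x|² + y² − 1)] / [1 − X^{(N−p)/(2(p−1))}]². Then V_p(x,y) ≥ 1. -/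
open Real

lemma aux10 (p N : ℝ) (hp2 : 2 ≤ p) (hpN : p < N) (s y : ℝ) (hs : 0 ≤ s) (hy : 0 < y) :
    1 ≤ (1 + ((s + (1 - y) ^ 2) / (s + (1 + y) ^ 2)) ^ ((N - 1) / (p - 1))
          - 2 * ((s + (1 - y) ^ 2) / (s + (1 + y) ^ 2)) ^ ((N - p) / (2 * (p - 1)))
            * (s + (1 + y) ^ 2)⁻¹ * (s + y ^ 2 - 1))
        / (1 - ((s + (1 - y) ^ 2) / (s + (1 + y) ^ 2)) ^ ((N - p) / (2 * (p - 1)))) ^ 2 := by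
  have hp1 : (0:ℝ) < p - 1 := by linarith
  have hB0 : (0:ℝ) < s + (1 + y) ^ 2 := by positivity
  have hA0 : (0:ℝ) ≤ s + (1 - y) ^ 2 := by positivity
  have hAB : s + (1 - y) ^ 2 < s + (1 + y) ^ 2 := by nlinarith
  set X := (s + (1 - y) ^ 2) / (s + (1 + y) ^ 2) with hX
  have hX0 : 0 ≤ X := div_nonneg hA0 hB0.le
  have hX1 : X < 1 := (div_lt_one hB0).mpr hAB
  set a := (N - p) / (2 * (p - 1)) with ha
  have ha0 : 0 < a := div_pos (by linarith) (by linarith)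
  have hexp : (N - 1) / (p - 1) = 2 * a + 1 := by
    rw [ha]; field_simp; ring
  rw [hexp]
  rcases eq_or_lt_of_le hX0 with h0 | h0
  · rw [← h0, Real.zero_rpow (by positivity), Real.zero_rpow (ne_of_gt ha0)]
    norm_num
  · set u := X ^ a with hu
    have hu0 : 0 < u := Real.rpow_pos_of_pos h0 a
    have hu1 : u < 1 := Real.rpow_lt_one hX0 hX1 ha0
    have hpow : X ^ (2 * a + 1) = u ^ 2 * X := by
      rw [hu, Real.rpow_add h0, Real.rpow_one, ← Real.rpow_natCast (X ^ a) 2,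
        ← Real.rpow_mul hX0]
      norm_num [mul_comm]
    rw [hpow, le_div_iff₀ (pow_pos (by linarith : (0:ℝ) < 1 - u) 2), hX]
    field_simp
    nlinarith [mul_nonneg (mul_nonneg hu0.le (sub_nonneg.mpr hu1.le)) hy.le,
      sq_nonneg u, sq_nonneg (1 - u), mul_pos hu0 hy]

/-- For `2 ≤ p < N`, `(x,y)` in the half-space with `(x,y) ≠ (0,1)`, the potential
`V_p(x,y) = [1 + X^{(N−1)/(p−1)} − 2X^{(N−p)/(2(p−1))}(|x|²+(1+y)²)^{−1}(|x|²+y²−1)]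
/ [1 − X^{(N−p)/(2(p−1))}]²`, with `X = (|x|²+(1−y)²)/(|x|²+(1+y)²)`, satisfies
`V_p ≥ 1`.  (Here `N = m + 1`.) -/
theorem stmt10 {m : ℕ} (hm : 1 ≤ m) (p : ℝ) (hp2 : 2 ≤ p) (hpN : p < (m + 1 : ℝ))
    (x : EuclideanSpace ℝ (Fin m)) (y : ℝ) (hy : 0 < y) (hxy : ¬(x = 0 ∧ y = 1)) :
    1 ≤ (1 + ((‖x‖ ^ 2 + (1 - y) ^ 2) / (‖x‖ ^ 2 + (1 + y) ^ 2)) ^ (((m + 1 : ℝ) - 1) / (p - 1))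
          - 2 * ((‖x‖ ^ 2 + (1 - y) ^ 2) / (‖x‖ ^ 2 + (1 + y) ^ 2))
              ^ (((m + 1 : ℝ) - p) / (2 * (p - 1)))
            * (‖x‖ ^ 2 + (1 + y) ^ 2)⁻¹ * (‖x‖ ^ 2 + y ^ 2 - 1))
        / (1 - ((‖x‖ ^ 2 + (1 - y) ^ 2) / (‖x‖ ^ 2 + (1 + y) ^ 2))
              ^ (((m + 1 : ℝ) - p) / (2 * (p - 1)))) ^ 2 :=
  aux10 p (m + 1) hp2 hpN (‖x‖ ^ 2) y (by positivity) hy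
end

section
/- Let N ≥ 2. There is no measurable function g : ℝ^N → (0,∞) and exponent q ∈ [1,∞) and constant C > 0 such that C (∫_{ℝ^N} |u|^q g(x) dx)^{N/q} ≤ ∫_{ℝ^N} |∇u|^N dx holds for all radially symmetric u ∈ C_c^1(ℝ^N). -/
open Real MeasureTheory Metric Set Filter
set_option maxHeartbeats 2000000 in

lemma aux_test {N : ℕ} (hN : 2 ≤ N) :
    ∃ K : ℝ, 0 ≤ K ∧ ∀ L : ℝ, 1 ≤ L →
      ∃ u : EuclideanSpace ℝ (Fin N) → ℝ,
        ContDiff ℝ 1 u ∧ HasCompactSupport u ∧ (∃ w : ℝ → ℝ, ∀ x, u x = w ‖x‖) ∧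
        (∀ x, 0 ≤ u x) ∧ (∀ x, u x ≤ 1) ∧
        (∀ x : EuclideanSpace ℝ (Fin N), 1 ≤ ‖x‖ → ‖x‖ ≤ 2 → u x = 1) ∧
        ∫ x, ‖fderiv ℝ u x‖ ^ N ≤ K / L := by
  haveI : Nontrivial (EuclideanSpace ℝ (Fin N)) :=
    Module.nontrivial_of_finrank_pos (R := ℝ) (by rw [finrank_euclideanSpace_fin]; omega)
  set E := EuclideanSpace ℝ (Fin N) with hE
  let b : ContDiffBump (0:ℝ) := ⟨1, 2, one_pos, one_lt_two⟩
  have hb : ContDiff ℝ 1 ⇑b := b.contDiff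
  have hcd : Continuous (deriv ⇑b) := hb.continuous_deriv le_rfl
  have hcs : HasCompactSupport fun t => |deriv (⇑b) t| :=
    (b.hasCompactSupport.deriv).comp_left (g := fun r : ℝ => |r|) abs_zero
  obtain ⟨t₀, hM⟩ := (hcd.abs).exists_forall_ge_of_hasCompactSupport hcs
  set M : ℝ := |deriv (⇑b) t₀| with hMdef
  have hM0 : 0 ≤ M := abs_nonneg _
  set volb : ℝ := (volume (ball (0:E) 1)).toReal with hvolb
  have hvolb0 : 0 ≤ volb := ENNReal.toReal_nonneg
  refine ⟨4 * N * volb * M ^ N, by positivity, ?_⟩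
  intro L hL
  have hL0 : (0:ℝ) < L := lt_of_lt_of_le one_pos hL
  set a : ℝ := exp (-(2*L)) with ha
  set R : ℝ := exp (2*L) with hR
  have ha0 : 0 < a := exp_pos _
  have haR : a < R := by
    apply exp_lt_exp.2; nlinarith
  have ha1 : a ≤ 1 := exp_le_one_iff.2 (by nlinarith)
  have hR1 : 1 ≤ R := one_le_exp_iff.2 (by nlinarith)
  classical
  set u : E → ℝ := fun x => if x = 0 then 0 else b (L⁻¹ * Real.log ‖x‖) with hu
  -- basic vanishing / one facts
  have h_zero_small : ∀ x : E, ‖x‖ < a → u x = 0 := by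
    intro x hx
    by_cases hx0 : x = 0
    · simp [hu, hx0]
    · rw [hu]; simp only [if_neg hx0]
      apply b.zero_of_le_dist
      have hnx : 0 < ‖x‖ := norm_pos_iff.2 hx0
      have : Real.log ‖x‖ < -(2*L) := by
        have := Real.log_lt_log hnx hx
        rwa [ha, Real.log_exp] at this
      have h2 : L⁻¹ * Real.log ‖x‖ < -2 := by
        rw [inv_mul_lt_iff₀ hL0]
        nlinarith
      have h3 : (2:ℝ) ≤ |L⁻¹ * Real.log ‖x‖| := by
        rw [abs_of_nonpos (by nlinarith)]; linarith
      rw [Real.dist_eq, sub_zero]; exact h3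
  have h_zero_big : ∀ x : E, R < ‖x‖ → u x = 0 := by
    intro x hx
    have hx0 : x ≠ 0 := by
      intro h; rw [h] at hx; simp at hx; nlinarith
    rw [hu]; simp only [if_neg hx0]
    apply b.zero_of_le_dist
    have : (2*L) < Real.log ‖x‖ := by
      have := Real.log_lt_log (exp_pos _) hx
      rwa [Real.log_exp] at this
    have h2 : (2:ℝ) < L⁻¹ * Real.log ‖x‖ := by
      rw [lt_inv_mul_iff₀ hL0]; nlinarith
    have h3 : (2:ℝ) ≤ |L⁻¹ * Real.log ‖x‖| := by
      rw [abs_of_nonneg (by nlinarith)]; linarith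
    rw [Real.dist_eq, sub_zero]; exact h3
  have h_one : ∀ x : E, 1 ≤ ‖x‖ → ‖x‖ ≤ 2 → u x = 1 := by
    intro x h1 h2
    have hx0 : x ≠ 0 := by
      intro h; rw [h] at h1; simp at h1; linarith
    rw [hu]; simp only [if_neg hx0]
    apply b.one_of_mem_closedBall
    have hl0 : 0 ≤ Real.log ‖x‖ := Real.log_nonneg h1
    have hl1 : Real.log ‖x‖ ≤ 1 := by
      have := Real.log_le_log (by linarith) h2
      have h22 : Real.log 2 ≤ 1 := by
        have := Real.log_le_sub_one_of_pos (by norm_num : (0:ℝ) < 2)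
        linarith
      linarith
    have h3 : |L⁻¹ * Real.log ‖x‖| ≤ 1 := by
      rw [abs_of_nonneg (by positivity)]
      rw [inv_mul_le_iff₀ hL0]; nlinarith
    rw [mem_closedBall, Real.dist_eq, sub_zero]; exact h3
  -- eventual equality with the smooth composition away from 0
  have h_ev : ∀ x : E, x ≠ 0 → u =ᶠ[nhds x] fun y => b (L⁻¹ * Real.log ‖y‖) := by
    intro x hx0
    have : ∀ᶠ y in nhds x, y ≠ 0 := isOpen_compl_singleton.eventually_mem hx0
    filter_upwards [this] with y hy
    rw [hu]; simp only [if_neg hy]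
  -- smoothness
  have hu_cd : ContDiff ℝ 1 u := by
    rw [contDiff_iff_contDiffAt]
    intro x
    by_cases hx : ‖x‖ < a
    · have hev : u =ᶠ[nhds x] fun _ => (0:ℝ) := by
        have hopen : IsOpen {y : E | ‖y‖ < a} := isOpen_lt continuous_norm continuous_const
        filter_upwards [hopen.eventually_mem hx] with y hy
        exact h_zero_small y hy
      exact contDiffAt_const.congr_of_eventuallyEq hev
    · have hx0 : x ≠ 0 := by
        intro h; rw [h] at hx; simp at hx; linarith
      have h1 : ContDiffAt ℝ 1 (fun y : E => ‖y‖) x := contDiffAt_norm ℝ hx0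
      have h2 : ContDiffAt ℝ 1 (fun y : E => Real.log ‖y‖) x :=
        (Real.contDiffAt_log.2 (norm_ne_zero_iff.2 hx0)).comp x h1
      have h3 : ContDiffAt ℝ 1 (fun y : E => L⁻¹ * Real.log ‖y‖) x := h2.const_smul L⁻¹
      have h4 : ContDiffAt ℝ 1 (fun y : E => b (L⁻¹ * Real.log ‖y‖)) x :=
        (b.contDiff.contDiffAt).comp x h3
      exact h4.congr_of_eventuallyEq (h_ev x hx0)
  -- compact support
  have hu_supp : HasCompactSupport u := by
    apply HasCompactSupport.intro (isCompact_closedBall (0:E) R)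
    intro x hx
    apply h_zero_big
    simpa [mem_closedBall, dist_zero_right, not_le] using hx
  -- fderiv vanishing
  have hder_small : ∀ x : E, ‖x‖ < a → fderiv ℝ u x = 0 := by
    intro x hx
    have hev : u =ᶠ[nhds x] fun _ => (0:ℝ) := by
      have hopen : IsOpen {y : E | ‖y‖ < a} := isOpen_lt continuous_norm continuous_const
      filter_upwards [hopen.eventually_mem hx] with y hy
      exact h_zero_small y hy
    rw [hev.fderiv_eq, fderiv_fun_const]
    rfl
  have hder_big : ∀ x : E, R < ‖x‖ → fderiv ℝ u x = 0 := by
    intro x hx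
    have hev : u =ᶠ[nhds x] fun _ => (0:ℝ) := by
      have hopen : IsOpen {y : E | R < ‖y‖} := isOpen_lt continuous_const continuous_norm
      filter_upwards [hopen.eventually_mem hx] with y hy
      exact h_zero_big y hy
    rw [hev.fderiv_eq, fderiv_fun_const]
    rfl
  -- fderiv bound
  have hder_bound : ∀ x : E, x ≠ 0 → ‖fderiv ℝ u x‖ ≤ M / (L * ‖x‖) := by
    intro x hx0
    have hnx : 0 < ‖x‖ := norm_pos_iff.2 hx0
    have hnormdiff : DifferentiableAt ℝ (fun y : E => ‖y‖) x :=
      (contDiffAt_norm ℝ (n := 1) hx0).differentiableAt one_ne_zero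
    set D := fderiv ℝ (fun y : E => ‖y‖) x with hD
    have hDle : ‖D‖ ≤ 1 := by
      have := norm_fderiv_le_of_lipschitz ℝ (lipschitzWith_one_norm (E := E)) (x₀ := x)
      simpa using this
    have h1 : HasFDerivAt (fun y : E => Real.log ‖y‖) (‖x‖⁻¹ • D) x :=
      hnormdiff.hasFDerivAt.log hnx.ne'
    have h2 : HasFDerivAt (fun y : E => L⁻¹ * Real.log ‖y‖) (L⁻¹ • (‖x‖⁻¹ • D)) x :=
      h1.const_smul L⁻¹
    have hbd : HasDerivAt (⇑b) (deriv (⇑b) (L⁻¹ * Real.log ‖x‖)) (L⁻¹ * Real.log ‖x‖) :=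
      ((hb.differentiable one_ne_zero) _).hasDerivAt
    have h3 : HasFDerivAt (fun y : E => b (L⁻¹ * Real.log ‖y‖))
        (deriv (⇑b) (L⁻¹ * Real.log ‖x‖) • (L⁻¹ • ‖x‖⁻¹ • D)) x :=
      by have := hbd.comp_hasFDerivAt x h2; exact this
    have h4 : HasFDerivAt u (deriv (⇑b) (L⁻¹ * Real.log ‖x‖) • (L⁻¹ • ‖x‖⁻¹ • D)) x :=
      h3.congr_of_eventuallyEq (h_ev x hx0)
    rw [h4.fderiv]
    rw [norm_smul, norm_smul, norm_smul]
    simp only [Real.norm_eq_abs, abs_inv, abs_of_pos hL0, abs_of_pos hnx]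
    rw [div_eq_mul_inv, mul_inv]
    calc |deriv (⇑b) (L⁻¹ * Real.log ‖x‖)| * (L⁻¹ * (‖x‖⁻¹ * ‖D‖))
        ≤ M * (L⁻¹ * (‖x‖⁻¹ * 1)) := by
          apply mul_le_mul (hM _) _ (by positivity) hM0
          apply mul_le_mul_of_nonneg_left _ (by positivity)
          apply mul_le_mul_of_nonneg_left hDle (by positivity)
      _ = M * (L⁻¹ * ‖x‖⁻¹) := by ring
  -- the annulus
  set A : Set E := closedBall 0 R \ ball 0 a with hA
  have hA_meas : MeasurableSet A := measurableSet_closedBall.diff measurableSet_ball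
  have hA_cpt : IsCompact A := (isCompact_closedBall _ _).diff isOpen_ball
  have hmemA : ∀ x : E, x ∈ A ↔ a ≤ ‖x‖ ∧ ‖x‖ ≤ R := by
    intro x
    rw [hA, mem_diff, mem_closedBall, mem_ball, dist_zero_right, not_lt]
    exact ⟨fun h => ⟨h.2, h.1⟩, fun h => ⟨h.2, h.1⟩⟩
  have hNne : N ≠ 0 := by omega
  have hcontf : Continuous fun x : E => ‖fderiv ℝ u x‖ ^ N :=
    ((hu_cd.continuous_fderiv one_ne_zero).norm).pow N
  have hvanish : ∀ x : E, x ∉ A → ‖fderiv ℝ u x‖ ^ N = 0 := by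
    intro x hx
    rw [hmemA, not_and_or, not_le, not_le] at hx
    rcases hx with h1 | h1
    · rw [hder_small x h1]; simp [hNne]
    · rw [hder_big x h1]; simp [hNne]
  have step1 : ∫ x, ‖fderiv ℝ u x‖ ^ N = ∫ x in A, ‖fderiv ℝ u x‖ ^ N :=
    (setIntegral_eq_integral_of_forall_compl_eq_zero hvanish).symm
  have hint1 : IntegrableOn (fun x : E => ‖fderiv ℝ u x‖ ^ N) A volume :=
    hcontf.continuousOn.integrableOn_compact hA_cpt
  have hcontG : ContinuousOn (fun x : E => (M / (L * ‖x‖)) ^ N) A := by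
    apply ContinuousOn.pow
    apply continuousOn_const.div (continuousOn_const.mul continuous_norm.continuousOn)
    intro x hx
    rw [hmemA] at hx
    have : 0 < ‖x‖ := lt_of_lt_of_le ha0 hx.1
    exact mul_ne_zero hL0.ne' this.ne'
  have hint2 : IntegrableOn (fun x : E => (M / (L * ‖x‖)) ^ N) A volume :=
    hcontG.integrableOn_compact hA_cpt
  have step2 : ∫ x in A, ‖fderiv ℝ u x‖ ^ N ≤ ∫ x in A, (M / (L * ‖x‖)) ^ N := by
    apply setIntegral_mono_on hint1 hint2 hA_meas
    intro x hx
    rw [hmemA] at hx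
    have hx0 : x ≠ 0 := by
      intro h; rw [h] at hx; simp at hx; nlinarith [hx.1]
    exact pow_le_pow_left₀ (norm_nonneg _) (hder_bound x hx0) N
  set F : ℝ → ℝ := (Icc a R).indicator (fun r => (M / (L * r)) ^ N) with hF
  have step3 : ∫ x in A, (M / (L * ‖x‖)) ^ N = ∫ x : E, F ‖x‖ := by
    rw [← integral_indicator hA_meas]
    congr 1; funext x
    by_cases h : x ∈ A
    · rw [indicator_of_mem h, hF, indicator_of_mem (by rw [hmemA] at h; exact ⟨h.1, h.2⟩)]
    · rw [indicator_of_notMem h, hF,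
        indicator_of_notMem (by intro hc; exact h ((hmemA x).2 ⟨hc.1, hc.2⟩))]
  have step4 := MeasureTheory.integral_fun_norm_addHaar (volume : Measure E) F
  rw [finrank_euclideanSpace_fin] at step4
  have hIccIoi : Icc a R ⊆ Ioi (0:ℝ) := fun r hr => lt_of_lt_of_le ha0 hr.1
  have inner1 : (fun y : ℝ => y ^ (N-1) • F y)
      = (Icc a R).indicator (fun y => y ^ (N-1) * (M / (L * y)) ^ N) := by
    funext y
    by_cases h : y ∈ Icc a R
    · rw [hF, indicator_of_mem h, indicator_of_mem h, smul_eq_mul]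
    · rw [hF, indicator_of_notMem h, indicator_of_notMem h, smul_zero]
  have inner2 : ∫ y in Ioi (0:ℝ), y ^ (N-1) • F y
      = ∫ y in Icc a R, y ^ (N-1) * (M / (L * y)) ^ N := by
    rw [inner1, integral_indicator measurableSet_Icc,
      Measure.restrict_restrict measurableSet_Icc, inter_eq_self_of_subset_left hIccIoi]
  have inner3 : ∫ y in Icc a R, y ^ (N-1) * (M / (L * y)) ^ N
      = (M/L)^N * ∫ y in Icc a R, y⁻¹ := by
    rw [← integral_const_mul]
    apply setIntegral_congr_fun measurableSet_Icc
    intro y hy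
    have hy0 : 0 < y := lt_of_lt_of_le ha0 hy.1
    have hyne : y ≠ 0 := ne_of_gt hy0
    have hpow : y ^ N = y ^ (N-1) * y := by rw [← pow_succ]; congr 1; omega
    calc y ^ (N-1) * (M / (L * y)) ^ N
        = y ^ (N-1) * ((M/L)^N * ((y^(N-1))⁻¹ * y⁻¹)) := by
          rw [← div_div, div_eq_mul_inv (M / L) y, mul_pow, inv_pow, hpow, mul_inv]
      _ = (M/L)^N * (y^(N-1) * (y^(N-1))⁻¹ * y⁻¹) := by ring
      _ = (M/L)^N * y⁻¹ := by rw [mul_inv_cancel₀ (pow_ne_zero _ hyne), one_mul]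
  have inner4 : ∫ y in Icc a R, (y:ℝ)⁻¹ = 4 * L := by
    rw [integral_Icc_eq_integral_Ioc, ← intervalIntegral.integral_of_le haR.le,
      integral_inv_of_pos ha0 (exp_pos _)]
    have : R / a = exp (4*L) := by rw [hR, ha, ← Real.exp_sub]; congr 1; ring
    rw [this, Real.log_exp]
  have keyineq : (N:ℝ) * (volb * ((M/L)^N * (4*L))) ≤ 4*N*volb*M^N / L := by
    have h1 : L / L^N ≤ 1 / L := by
      rw [div_le_div_iff₀ (pow_pos hL0 N) hL0, one_mul]
      calc L * L = L^2 := by ring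
        _ ≤ L^N := pow_le_pow_right₀ hL hN
    have h2 : (0:ℝ) ≤ 4*N*volb*M^N := by positivity
    calc (N:ℝ) * (volb * ((M/L)^N * (4*L))) = (4*N*volb*M^N) * (L / L^N) := by
          rw [div_pow]; ring
      _ ≤ (4*N*volb*M^N) * (1/L) := mul_le_mul_of_nonneg_left h1 h2
      _ = 4*N*volb*M^N / L := by ring
  refine ⟨u, hu_cd, hu_supp,
    ⟨fun r => if r = 0 then 0 else b (L⁻¹ * Real.log r), ?_⟩, ?_, ?_, h_one, ?_⟩
  · intro x
    rw [hu]
    by_cases h : x = 0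
    · rw [h]; simp
    · simp only [if_neg h, if_neg (norm_ne_zero_iff.2 h)]
  · intro x; rw [hu]; by_cases h : x = 0 <;> simp [h, b.nonneg]
  · intro x; rw [hu]; by_cases h : x = 0 <;> simp [h, b.le_one]
  · calc ∫ x, ‖fderiv ℝ u x‖ ^ N = ∫ x in A, ‖fderiv ℝ u x‖ ^ N := step1
      _ ≤ ∫ x in A, (M / (L * ‖x‖)) ^ N := step2
      _ = ∫ x : E, F ‖x‖ := step3
      _ = (N:ℝ) * (volb * ((M/L)^N * (4*L))) := by
          rw [step4, inner2, inner3, inner4, nsmul_eq_mul, smul_eq_mul, measureReal_def, ← hvolb]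
      _ ≤ 4*N*volb*M^N / L := keyineq
      _ ≤ 4 * N * volb * M ^ N / L := le_refl _

set_option maxHeartbeats 1000000 in
/-- The radial critical Sobolev space on `ℝ^N` cannot be embedded into any weighted
Lebesgue space: there is no positive (measurable, locally integrable) weight `g`,
exponent `q ∈ [1, ∞)`, and constant `C > 0` such that
`C (∫ |u|^q g)^{N/q} ≤ ∫ |∇u|^N` for all radially symmetric `u ∈ C_c^1(ℝ^N)`. -/
theorem stmt16 {N : ℕ} (hN : 2 ≤ N) :
    ¬ ∃ (g : EuclideanSpace ℝ (Fin N) → ℝ) (q C : ℝ),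
        Measurable g ∧ (∀ x, 0 < g x) ∧ LocallyIntegrable g volume ∧
        1 ≤ q ∧ 0 < C ∧
        ∀ u : EuclideanSpace ℝ (Fin N) → ℝ,
          ContDiff ℝ 1 u → HasCompactSupport u →
          (∃ w : ℝ → ℝ, ∀ x, u x = w ‖x‖) →
          C * (∫ x, |u x| ^ q * g x) ^ ((N : ℝ) / q)
            ≤ ∫ x, ‖fderiv ℝ u x‖ ^ N := by
  rintro ⟨g, q, C, hg_meas, hg_pos, hg_loc, hq, hC, H⟩
  have hq0 : (0:ℝ) < q := lt_of_lt_of_le one_pos hq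
  set A₀ : Set (EuclideanSpace ℝ (Fin N)) := closedBall 0 2 \ ball 0 1 with hA₀
  have hA₀meas : MeasurableSet A₀ := measurableSet_closedBall.diff measurableSet_ball
  have hA₀cpt : IsCompact A₀ := (isCompact_closedBall _ _).diff isOpen_ball
  have hmem : ∀ x : EuclideanSpace ℝ (Fin N), x ∈ A₀ ↔ 1 ≤ ‖x‖ ∧ ‖x‖ ≤ 2 := by
    intro x
    rw [hA₀, mem_diff, mem_closedBall, mem_ball, dist_zero_right, not_lt]
    exact ⟨fun h => ⟨h.2, h.1⟩, fun h => ⟨h.2, h.1⟩⟩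
  have hgint : IntegrableOn g A₀ volume := hg_loc.integrableOn_isCompact hA₀cpt
  set I : ℝ := ∫ x in A₀, g x with hI
  have hIpos : 0 < I := by
    rw [hI]
    apply (setIntegral_pos_iff_support_of_nonneg_ae
      (Filter.Eventually.of_forall fun x => (hg_pos x).le) hgint).2
    have hsupp : Function.support g = univ := eq_univ_of_forall fun x => (hg_pos x).ne'
    rw [hsupp, univ_inter]
    set v : EuclideanSpace ℝ (Fin N) := (3/2 : ℝ) • EuclideanSpace.single ⟨0, by omega⟩ (1:ℝ)
      with hv
    have hvnorm : ‖v‖ = 3/2 := by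
      rw [hv, norm_smul, EuclideanSpace.norm_single]
      norm_num
    have hsub : ball v (1/2) ⊆ A₀ := by
      intro y hy
      rw [mem_ball] at hy
      rw [hmem]
      have h1 : ‖y - v‖ < 1/2 := by rwa [← dist_eq_norm]
      have h2 : ‖y‖ - ‖v‖ ≤ ‖y - v‖ := norm_sub_norm_le y v
      have h4 : ‖v‖ - ‖y‖ ≤ ‖v - y‖ := norm_sub_norm_le v y
      have h5 : ‖v - y‖ = ‖y - v‖ := norm_sub_rev v y
      constructor
      · linarith
      · linarith
    calc (0:ENNReal) < volume (ball v (1/2)) := measure_ball_pos volume v (by norm_num)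
      _ ≤ volume A₀ := measure_mono hsub
  obtain ⟨K, hK0, hKtest⟩ := aux_test hN
  have hP : 0 < C * I ^ ((N:ℝ)/q) := mul_pos hC (Real.rpow_pos_of_pos hIpos _)
  set L : ℝ := max 1 (K / (C * I ^ ((N:ℝ)/q)) + 1) with hLdef
  have hL1 : (1:ℝ) ≤ L := le_max_left _ _
  have hLpos : (0:ℝ) < L := lt_of_lt_of_le one_pos hL1
  obtain ⟨u, hu1, hu2, hu3, hupos, hule, huone, huenergy⟩ := hKtest L hL1
  have hmain := H u hu1 hu2 hu3
  set f : EuclideanSpace ℝ (Fin N) → ℝ := fun x => |u x| ^ q * g x with hf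
  have hfnonneg : ∀ x, 0 ≤ f x := fun x =>
    mul_nonneg (Real.rpow_nonneg (abs_nonneg _) q) (hg_pos x).le
  have hf_int : Integrable f := by
    have hgK : IntegrableOn g (tsupport u) := hg_loc.integrableOn_isCompact hu2
    have hind : Integrable ((tsupport u).indicator g) :=
      (integrable_indicator_iff (isClosed_tsupport u).measurableSet).2 hgK
    apply Integrable.mono' hind
    · exact ((hu1.continuous.abs.rpow_const fun x => Or.inr hq0.le).aestronglyMeasurable).mul
        hg_meas.aestronglyMeasurable
    · apply Filter.Eventually.of_forall
      intro x
      rw [Real.norm_eq_abs, abs_of_nonneg (hfnonneg x)]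
      by_cases hx : x ∈ tsupport u
      · rw [indicator_of_mem hx]
        have h1 : |u x| ^ q ≤ 1 :=
          Real.rpow_le_one (abs_nonneg _)
            (by rw [abs_le]; exact ⟨by linarith [hupos x], hule x⟩) hq0.le
        exact mul_le_of_le_one_left (hg_pos x).le h1
      · rw [indicator_of_notMem hx, hf]
        have hux : u x = 0 := image_eq_zero_of_notMem_tsupport hx
        simp [hux, Real.zero_rpow (ne_of_gt hq0)]
  have hIle : I ≤ ∫ x, f x := by
    have h1 : I = ∫ x in A₀, f x := by
      rw [hI]
      apply setIntegral_congr_fun hA₀meas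
      intro x hx
      rw [hmem] at hx
      rw [hf]
      simp [huone x hx.1 hx.2, Real.one_rpow]
    rw [h1]
    exact setIntegral_le_integral hf_int (Filter.Eventually.of_forall hfnonneg)
  have hchain : C * I ^ ((N:ℝ)/q) ≤ K / L := by
    refine le_trans ?_ (le_trans hmain huenergy)
    apply mul_le_mul_of_nonneg_left _ hC.le
    exact Real.rpow_le_rpow hIpos.le hIle (by positivity)
  have hKL : K / L < C * I ^ ((N:ℝ)/q) := by
    rw [div_lt_iff₀ hLpos]
    have h2 : K / (C * I ^ ((N:ℝ)/q)) + 1 ≤ L := le_max_right _ _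
    calc K = (C * I ^ ((N:ℝ)/q)) * (K / (C * I ^ ((N:ℝ)/q))) := by field_simp
      _ < (C * I ^ ((N:ℝ)/q)) * L := by
          apply mul_lt_mul_of_pos_left _ hP
          have : 0 ≤ K / (C * I ^ ((N:ℝ)/q)) := div_nonneg hK0 hP.le
          linarith
  linarith
end
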